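/- For all nonnegative integers a and b and any element x of a commutative ring, (T_{a+b}(x) - 1) * (T_{|a-b|}(x) - 1) = (T_a(x) - T_b(x))^2, where T_n denotes the n-th Chebyshev polynomial of the first kind. -/

import Mathlib

open Polynomial Polynomial.Chebyshev

lemma chebyshev_key (m n : ℤ) :
    (T ℤ (m + n) - 1) * (T ℤ (m - n) - 1) = (T ℤ m - T ℤ n) ^ 2 := by
  have h2 : (2 : Polynomial ℤ) ≠ 0 := by norm_num
  apply mul_left_cancel₀ (mul_ne_zero h2 h2)
  have e1 := T_mul_T ℤ m n
  have e2 := T_mul_T ℤ m m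
  have e3 := T_mul_T ℤ n n
  have e4 := T_mul_T ℤ (m + n) (m - n)
  rw [show m + n + (m - n) = 2 * m by ring, show m + n - (m - n) = 2 * n by ring] at e4
  rw [show m + m = 2 * m by ring, sub_self, T_zero] at e2
  rw [show n + n = 2 * n by ring, sub_self, T_zero] at e3
  linear_combination 2 * e4 + 4 * e1 - 2 * e2 - 2 * e3

theorem chebyshev_prod_identity (R : Type*) [CommRing R] (a b : ℕ) (x : R) :
    ((T R (a + b)).eval x - 1) * ((T R |(a : ℤ) - b|).eval x - 1)
      = ((T R a).eval x - (T R b).eval x) ^ 2 := by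
  have habs : T R |(a : ℤ) - b| = T R ((a : ℤ) - b) := by
    rcases abs_choice ((a : ℤ) - b) with h | h <;> rw [h]
    exact T_neg R _
  rw [habs]
  have key := chebyshev_key (a : ℤ) (b : ℤ)
  have := congrArg (map (Int.castRingHom R)) key
  simp only [Polynomial.map_mul, Polynomial.map_sub, Polynomial.map_pow,
    Polynomial.map_one, map_T] at this
  have := congrArg (eval x) this
  simpa using this
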